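/- (Fundamental lemma: composition of linear functors is given by pullback composition of spans; set-level.) Let I ←s M →t J and J ←u N →v K be spans of types, and let P = {(m, n) : M × N // t m = u n} be the pullback of t and u, with projections π₁ : P → M and π₂ : P → N. Then the composite of the associated linear functors, (Over.pullback s ⋙ Over.map t) ⋙ (Over.pullback u ⋙ Over.map v) : Over I ⥤ Over K, is naturally isomorphic to the linear functor of the composite span, Over.pullback (s ∘ π₁) ⋙ Over.map (v ∘ π₂). -/

import Mathlib

open CategoryTheory

universe u

section BC

open CategoryTheory.Limits

variable {C : Type*} [Category C] [HasPullbacks C]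

/-- The big pasted pullback square. -/
theorem bigPB {P M N J : C} {p₁ : P ⟶ M} {p₂ : P ⟶ N} {t : M ⟶ J} {u : N ⟶ J}
    (h : IsPullback p₁ p₂ t u) (A : Over M) :
    IsPullback (pullback.fst A.hom p₁) (pullback.snd A.hom p₁ ≫ p₂) (A.hom ≫ t) u :=
  ((IsPullback.of_hasPullback A.hom p₁).flip.paste_horiz h.flip).flip

/-- Beck–Chevalley isomorphism for a pullback square. -/
noncomputable def beckChevalley {P M N J : C} {p₁ : P ⟶ M} {p₂ : P ⟶ N} {t : M ⟶ J} {u : N ⟶ J}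
    (h : IsPullback p₁ p₂ t u) :
    Over.map t ⋙ Over.pullback u ≅ Over.pullback p₁ ⋙ Over.map p₂ := by
  refine NatIso.ofComponents
    (fun A => Over.isoMk (bigPB h A).isoPullback.symm (by simp)) ?_
  intro A B k
  ext
  dsimp
  apply pullback.hom_ext
  · simp
    erw [pullback.lift_fst, pullback.lift_fst]
    simp
  · rw [Category.assoc, Category.assoc]
    apply h.hom_ext
    · simp only [Category.assoc, ← pullback.condition]
      simp [Over.w k]
      erw [pullback.lift_fst_assoc, pullback.lift_fst_assoc]
      simp [Over.w k]
    · simp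
      erw [pullback.lift_snd_assoc]
      simp
      erw [pullback.lift_snd]

end BC

/-- The pullback (base change) functor along a map of types. -/
noncomputable def Over.pullbackType {X Y : Type u} (f : X → Y) : Over Y ⥤ Over X :=
  Over.pullback (TypeCat.ofHom f : X ⟶ Y)

/-- Composition of linear functors is given by pullback composition of spans
(set-level): for spans `I ←s M →t J` and `J ←u N →v K`, the composite of the
associated linear functors is naturally isomorphic to the linear functor of the
composite span obtained from the pullback `P = {(m,n) // t m = u n}`. -/
theorem linear_functor_comp_span {I M J N K : Type u}
    (s : M → I) (t : M → J) (u : N → J) (v : N → K) :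
    Nonempty (((Over.pullbackType s ⋙ Over.map (TypeCat.ofHom t : M ⟶ J)) ⋙
        (Over.pullbackType u ⋙ Over.map (TypeCat.ofHom v : N ⟶ K))) ≅
      (Over.pullbackType (fun q : {q : M × N // t q.1 = u q.2} => s q.1.1) ⋙
        Over.map (TypeCat.ofHom (fun q : {q : M × N // t q.1 = u q.2} => v q.1.2) :
          {q : M × N // t q.1 = u q.2} ⟶ K))) := by
  open CategoryTheory.Limits in
  refine ⟨?_⟩
  let P : Type u := {q : M × N // t q.1 = u q.2}
  let p₁ : P → M := fun q => q.1.1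
  let p₂ : P → N := fun q => q.1.2
  have hP : IsPullback (C := Type u) (TypeCat.ofHom p₁ : P ⟶ M) (TypeCat.ofHom p₂ : P ⟶ N) (TypeCat.ofHom t : M ⟶ J) (TypeCat.ofHom u : N ⟶ J) :=
    IsPullback.of_isLimit (Limits.Types.pullbackLimitCone (TypeCat.ofHom t : M ⟶ J) (TypeCat.ofHom u : N ⟶ J)).isLimit
  let F₁ : Over I ⥤ Over M := Over.pullback (TypeCat.ofHom s : M ⟶ I)
  let F₂ : Over M ⥤ Over J := Over.map (TypeCat.ofHom t : M ⟶ J)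
  let F₃ : Over J ⥤ Over N := Over.pullback (TypeCat.ofHom u : N ⟶ J)
  let F₄ : Over N ⥤ Over K := Over.map (TypeCat.ofHom v : N ⟶ K)
  let G₁ : Over M ⥤ Over P := Over.pullback (TypeCat.ofHom p₁ : P ⟶ M)
  let G₂ : Over P ⥤ Over N := Over.map (TypeCat.ofHom p₂ : P ⟶ N)
  have a1 : (F₁ ⋙ F₂) ⋙ (F₃ ⋙ F₄) ≅ F₁ ⋙ ((F₂ ⋙ F₃) ⋙ F₄) :=
    Functor.associator F₁ F₂ (F₃ ⋙ F₄) ≪≫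
      Functor.isoWhiskerLeft F₁ (Functor.associator F₂ F₃ F₄).symm
  have a2 : F₁ ⋙ ((F₂ ⋙ F₃) ⋙ F₄) ≅ F₁ ⋙ ((G₁ ⋙ G₂) ⋙ F₄) :=
    Functor.isoWhiskerLeft F₁ (Functor.isoWhiskerRight (beckChevalley hP) F₄)
  have a3 : F₁ ⋙ ((G₁ ⋙ G₂) ⋙ F₄) ≅ (F₁ ⋙ G₁) ⋙ (G₂ ⋙ F₄) :=
    Functor.isoWhiskerLeft F₁ (Functor.associator G₁ G₂ F₄) ≪≫
      (Functor.associator F₁ G₁ (G₂ ⋙ F₄)).symm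
  have a4 : (F₁ ⋙ G₁) ⋙ (G₂ ⋙ F₄) ≅
      Over.pullback (C := Type u) ((TypeCat.ofHom p₁ : P ⟶ M) ≫ (TypeCat.ofHom s : M ⟶ I)) ⋙
        Over.map ((TypeCat.ofHom p₂ : P ⟶ N) ≫ (TypeCat.ofHom v : N ⟶ K)) :=
    Functor.isoWhiskerRight (Over.pullbackComp (C := Type u) (TypeCat.ofHom p₁ : P ⟶ M) (TypeCat.ofHom s : M ⟶ I)).symm
        (G₂ ⋙ F₄) ≪≫
      Functor.isoWhiskerLeft (Over.pullback (C := Type u) ((TypeCat.ofHom p₁ : P ⟶ M) ≫ (TypeCat.ofHom s : M ⟶ I)))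
        (Over.mapComp (T := Type u) (TypeCat.ofHom p₂ : P ⟶ N) (TypeCat.ofHom v : N ⟶ K)).symm
  exact a1 ≪≫ a2 ≪≫ a3 ≪≫ a4
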